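/- Let E ⊆ V×V, W ⊆ V, P = Δ_{Wᶜ}E, K = (Pᵀ)⁺P⁺, and C = (Δ_W K Δ_W)⁺ ∪ Δ_W. Then C is a partial equivalence relation: it is symmetric (Cᵀ = C) and transitive (C C ⊆ C). -/

import Mathlib

open Relation Set

local infixr:80 " ∘r " => Relation.Comp

variable {V : Type*}

/-- Subdiagonal relation on a subset `X` of `V`. -/
def dia (X : Set V) : V → V → Prop := fun a b => a = b ∧ a ∈ X

/-- Foreset of a subset `C` under a relation `R`. -/
def foreset (R : V → V → Prop) (C : Set V) : Set V := {a | ∃ c ∈ C, R a c}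

theorem stmt14 (E : V → V → Prop) (W : Set V)
    (P K C : V → V → Prop)
    (hP : P = dia Wᶜ ∘r E)
    (hK : K = TransGen (flip P) ∘r TransGen P)
    (hC : C = TransGen (dia W ∘r (K ∘r dia W)) ⊔ dia W) :
    flip C = C ∧ C ∘r C ≤ C := by
  have hKs : ∀ a b, K a b → K b a := by
    intro a b h
    rw [hK] at h ⊢
    obtain ⟨c, h1, h2⟩ := h
    exact ⟨c, Relation.transGen_swap.mpr h2, Relation.transGen_swap.mpr h1⟩
  set D := dia W ∘r (K ∘r dia W) with hD
  have hDs : ∀ a b, D a b → D b a := by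
    rintro a b ⟨c, hac, d, hK1, hdb⟩
    obtain ⟨rfl, haW⟩ := hac
    obtain ⟨rfl, hdW⟩ := hdb
    exact ⟨d, ⟨rfl, hdW⟩, a, hKs _ _ hK1, rfl, haW⟩
  have hTs : ∀ a b, TransGen D a b → TransGen D b a := by
    intro a b h
    induction h with
    | single hab => exact Relation.TransGen.single (hDs _ _ hab)
    | tail _ hbc ih => exact Relation.TransGen.head (hDs _ _ hbc) ih
  constructor
  · funext a b
    rw [hC]
    simp only [flip, Pi.sup_apply, sup_Prop_eq, eq_iff_iff]
    constructor
    · rintro (h | ⟨rfl, hw⟩)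
      · exact Or.inl (hTs _ _ h)
      · exact Or.inr ⟨rfl, hw⟩
    · rintro (h | ⟨rfl, hw⟩)
      · exact Or.inl (hTs _ _ h)
      · exact Or.inr ⟨rfl, hw⟩
  · rintro a c ⟨b, hab, hbc⟩
    rw [hC] at hab hbc ⊢
    rcases hab with hab | ⟨rfl, hw⟩
    · rcases hbc with hbc | ⟨rfl, _⟩
      · exact Or.inl (hab.trans hbc)
      · exact Or.inl hab
    · rcases hbc with hbc | hbc
      · exact Or.inl hbc
      · exact Or.inr hbc
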